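/- The piecewise-linear interpolant satisfies the L₂ error bound ‖f − S‖_{L₂[0,1]} ≤ ‖f′‖_{L_p[0,1]} · h^s, where s := 1 − (1/p − 1/2)_+ (so s = 3/2 − 1/p for 1 ≤ p ≤ 2 and s = 1 for p ≥ 2). -/

import Mathlib

open MeasureTheory Set ENNReal


lemma pw_bound (f f' : ℝ → ℝ) (hf'int : IntegrableOn f' (Icc 0 1))
    (hAC : ∀ x ∈ Icc (0 : ℝ) 1, f x = f 0 + ∫ t in (0 : ℝ)..x, f' t)
    {a b : ℝ} (ha : 0 ≤ a) (hab : a < b) (hb : b ≤ 1)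
    {x : ℝ} (hx : x ∈ Icc a b) :
    |f x - (f a + (f b - f a) / (b - a) * (x - a))| ≤ ∫ t in a..b, |f' t| := by
  have hii : ∀ u v : ℝ, u ∈ Icc (0:ℝ) 1 → v ∈ Icc (0:ℝ) 1 →
      IntervalIntegrable f' volume u v := fun u v hu hv =>
    (hf'int.mono_set (uIcc_subset_Icc hu hv)).intervalIntegrable
  have haI : a ∈ Icc (0:ℝ) 1 := ⟨ha, hab.le.trans hb⟩
  have hbI : b ∈ Icc (0:ℝ) 1 := ⟨ha.trans hab.le, hb⟩
  have hxI : x ∈ Icc (0:ℝ) 1 := ⟨ha.trans hx.1, hx.2.trans hb⟩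
  have hdiff : ∀ u v : ℝ, u ∈ Icc (0:ℝ) 1 → v ∈ Icc (0:ℝ) 1 →
      f v - f u = ∫ t in u..v, f' t := by
    intro u v hu hv
    rw [hAC u hu, hAC v hv]
    have := intervalIntegral.integral_interval_sub_left (hii 0 v (by simp) hv)
      (hii 0 u (by simp) hu)
    rw [← this]; ring
  set θ : ℝ := (x - a) / (b - a) with hθdef
  have hba : (0:ℝ) < b - a := by linarith [hab]
  have hθ0 : 0 ≤ θ := div_nonneg (by linarith [hx.1]) hba.le
  have hθ1 : θ ≤ 1 := by
    rw [div_le_one hba]; linarith [hx.2]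
  have hI1 : IntervalIntegrable f' volume a x := hii a x haI hxI
  have hI2 : IntervalIntegrable f' volume x b := hii x b hxI hbI
  have hsplit : (∫ t in a..b, f' t) = (∫ t in a..x, f' t) + ∫ t in x..b, f' t :=
    (intervalIntegral.integral_add_adjacent_intervals hI1 hI2).symm
  have hfx : f x - (f a + (f b - f a) / (b - a) * (x - a)) =
      (1 - θ) * (∫ t in a..x, f' t) - θ * ∫ t in x..b, f' t := by
    have e1 : f x - f a = ∫ t in a..x, f' t := hdiff a x haI hxI
    have e2 : f b - f a = ∫ t in a..b, f' t := hdiff a b haI hbI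
    have : f x - (f a + (f b - f a) / (b - a) * (x - a)) =
        (f x - f a) - θ * (f b - f a) := by
      rw [hθdef]; field_simp; ring
    rw [this, e1, e2, hsplit]; ring
  have hJsplit : (∫ t in a..b, |f' t|) = (∫ t in a..x, |f' t|) + ∫ t in x..b, |f' t| :=
    (intervalIntegral.integral_add_adjacent_intervals hI1.abs hI2.abs).symm
  have hJ1 : |∫ t in a..x, f' t| ≤ ∫ t in a..x, |f' t| :=
    intervalIntegral.abs_integral_le_integral_abs hx.1
  have hJ2 : |∫ t in x..b, f' t| ≤ ∫ t in x..b, |f' t| :=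
    intervalIntegral.abs_integral_le_integral_abs hx.2
  have hJ1n : 0 ≤ ∫ t in a..x, |f' t| := le_trans (abs_nonneg _) hJ1
  have hJ2n : 0 ≤ ∫ t in x..b, |f' t| := le_trans (abs_nonneg _) hJ2
  rw [hfx, hJsplit]
  calc |(1 - θ) * (∫ t in a..x, f' t) - θ * ∫ t in x..b, f' t|
      ≤ |(1 - θ) * (∫ t in a..x, f' t)| + |θ * ∫ t in x..b, f' t| := abs_sub _ _
    _ = (1 - θ) * |∫ t in a..x, f' t| + θ * |∫ t in x..b, f' t| := by
        rw [abs_mul, abs_mul, abs_of_nonneg (by linarith : (0:ℝ) ≤ 1 - θ),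
          abs_of_nonneg hθ0]
    _ ≤ (∫ t in a..x, |f' t|) + ∫ t in x..b, |f' t| := by
        have h1 : (1 - θ) * |∫ t in a..x, f' t| ≤ ∫ t in a..x, |f' t| := by
          calc (1 - θ) * |∫ t in a..x, f' t| ≤ 1 * |∫ t in a..x, f' t| := by
                apply mul_le_mul_of_nonneg_right (by linarith) (abs_nonneg _)
            _ = |∫ t in a..x, f' t| := one_mul _
            _ ≤ _ := hJ1
        have h2 : θ * |∫ t in x..b, f' t| ≤ ∫ t in x..b, |f' t| := by
          calc θ * |∫ t in x..b, f' t| ≤ 1 * |∫ t in x..b, f' t| := by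
                apply mul_le_mul_of_nonneg_right hθ1 (abs_nonneg _)
            _ = |∫ t in x..b, f' t| := one_mul _
            _ ≤ _ := hJ2
        linarith


lemma cover_lemma {n : ℕ} (hn : 0 < n) (ξ : Fin (n + 1) → ℝ) (hmono : StrictMono ξ) :
    Ioc (ξ 0) (ξ (Fin.last n)) ⊆ ⋃ j : Fin n, Ioc (ξ j.castSucc) (ξ j.succ) := by
  intro x hx
  classical
  set T : Finset (Fin (n + 1)) := Finset.univ.filter (fun i => ξ i < x) with hT
  have h0T : (0 : Fin (n+1)) ∈ T := by
    simp [hT, hx.1]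
  have hTne : T.Nonempty := ⟨0, h0T⟩
  set j0 : Fin (n + 1) := T.max' hTne with hj0def
  have hj0 : ξ j0 < x := by
    have := T.max'_mem hTne
    simpa [hT] using this
  have hj0lt : (j0 : ℕ) < n := by
    rcases lt_or_eq_of_le (Fin.le_last j0) with hlt | heq
    · exact hlt
    · exfalso; rw [heq] at hj0; exact absurd hx.2 (not_le.mpr hj0)
  set j : Fin n := ⟨j0, hj0lt⟩ with hjdef
  have hcast : j.castSucc = j0 := by
    apply Fin.ext; simp [hjdef]
  have hle : x ≤ ξ j.succ := by
    by_contra hcon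
    push_neg at hcon
    have hmem : j.succ ∈ T := by simp [hT, hcon]
    have := T.le_max' _ hmem
    rw [← hj0def] at this
    have hlt : j.castSucc < j.succ := Fin.castSucc_lt_succ (i := j)
    rw [hcast] at hlt
    exact absurd this (not_le.mpr hlt)
  exact mem_iUnion.mpr ⟨j, ⟨by rwa [hcast], hle⟩⟩

lemma disj_lemma {n : ℕ} (ξ : Fin (n + 1) → ℝ) (hmono : StrictMono ξ) :
    Pairwise (Function.onFun Disjoint fun j : Fin n => Ioc (ξ j.castSucc) (ξ j.succ)) := by
  have key : ∀ i j : Fin n, i < j →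
      Disjoint (Ioc (ξ i.castSucc) (ξ i.succ)) (Ioc (ξ j.castSucc) (ξ j.succ)) := by
    intro i j hij
    rw [Set.Ioc_disjoint_Ioc]
    have h1 : ξ i.succ ≤ ξ j.castSucc := by
      apply hmono.monotone
      simp [Fin.le_def, Nat.succ_le_iff, hij]
    calc min (ξ i.succ) (ξ j.succ) ≤ ξ i.succ := min_le_left _ _
      _ ≤ ξ j.castSucc := h1
      _ ≤ max (ξ i.castSucc) (ξ j.castSucc) := le_max_right _ _
  intro i j hij
  rcases lt_or_gt_of_ne hij with h | h
  · exact key i j h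
  · exact (key j i h).symm

lemma sum_rpow_le {ι : Type*} (s : Finset ι) (g : ι → ℝ≥0∞) {q : ℝ} (hq : 1 ≤ q) :
    ∑ i ∈ s, g i ^ q ≤ (∑ i ∈ s, g i) ^ q := by
  classical
  induction s using Finset.induction_on with
  | empty => simp [ENNReal.zero_rpow_of_pos (by linarith : (0:ℝ) < q)]
  | insert _ _ hnotmem ih =>
    rename_i a s
    rw [Finset.sum_insert hnotmem, Finset.sum_insert hnotmem]
    calc g a ^ q + ∑ i ∈ s, g i ^ q ≤ g a ^ q + (∑ i ∈ s, g i) ^ q := by gcongr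
      _ ≤ (g a + ∑ i ∈ s, g i) ^ q := ENNReal.add_rpow_le_rpow_add _ _ hq

lemma core_lemma (p : ℝ≥0∞) (hp : 1 ≤ p) (hp2 : p ≤ 2)
    {n : ℕ} (hn : 0 < n) (ξ : Fin (n + 1) → ℝ)
    (hmono : StrictMono ξ) (hξ0 : ξ 0 = 0) (hξ1 : ξ (Fin.last n) = 1)
    (h : ℝ)
    (hmax : IsGreatest (Set.range fun j : Fin n => ξ j.succ - ξ j.castSucc) h)
    (f f' : ℝ → ℝ)
    (hf'int : IntegrableOn f' (Icc 0 1))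
    (hAC : ∀ x ∈ Icc (0 : ℝ) 1, f x = f 0 + ∫ t in (0 : ℝ)..x, f' t)
    (S : ℝ → ℝ)
    (hSaff : ∀ j : Fin n, ∀ x ∈ Icc (ξ j.castSucc) (ξ j.succ),
      S x = f (ξ j.castSucc) +
        (f (ξ j.succ) - f (ξ j.castSucc)) / (ξ j.succ - ξ j.castSucc) *
          (x - ξ j.castSucc)) :
    eLpNorm (fun t => f t - S t) 2 (volume.restrict (Icc 0 1)) ≤
      eLpNorm f' p (volume.restrict (Icc 0 1)) *
        (ENNReal.ofReal h) ^ (3 / 2 - 1 / p.toReal : ℝ) := by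
  classical
  have hptop : p ≠ ∞ := ne_top_of_le_ne_top (by norm_num) hp2
  have hp0 : p ≠ 0 := fun hc => by simp [hc] at hp
  set r : ℝ := p.toReal with hrdef
  have hr1 : 1 ≤ r := by
    rw [hrdef, ← ENNReal.toReal_one]
    exact ENNReal.toReal_mono hptop hp
  have hr2 : r ≤ 2 := by
    rw [hrdef]
    calc p.toReal ≤ (2 : ℝ≥0∞).toReal := ENNReal.toReal_mono (by norm_num) hp2
      _ = 2 := by norm_num
  have hr0 : (0:ℝ) < r := lt_of_lt_of_le one_pos hr1
  -- interval data
  set a : Fin n → ℝ := fun j => ξ j.castSucc with hadef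
  set b : Fin n → ℝ := fun j => ξ j.succ with hbdef
  have hab : ∀ j, a j < b j := fun j => hmono (Fin.castSucc_lt_succ (i := j))
  have ha0 : ∀ j, 0 ≤ a j := fun j => by
    rw [← hξ0]; exact hmono.monotone (Fin.zero_le _)
  have hb1 : ∀ j, b j ≤ 1 := fun j => by
    rw [← hξ1]; exact hmono.monotone (Fin.le_last _)
  set I : Fin n → Set ℝ := fun j => Ioc (a j) (b j) with hIdef
  have hIsub : ∀ j, I j ⊆ Icc (0:ℝ) 1 := fun j =>
    (Ioc_subset_Icc_self).trans (Icc_subset_Icc (ha0 j) (hb1 j))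
  have hΔle : ∀ j, b j - a j ≤ h := fun j => hmax.2 ⟨j, rfl⟩
  have hΔpos : ∀ j, 0 < b j - a j := fun j => sub_pos.mpr (hab j)
  have hh : 0 < h := lt_of_lt_of_le (hΔpos ⟨0, hn⟩) (hΔle ⟨0, hn⟩)
  set H : ℝ≥0∞ := ENNReal.ofReal h with hHdef
  set V : Fin n → ℝ≥0∞ := fun j => volume (I j) with hVdef
  have hVval : ∀ j, V j = ENNReal.ofReal (b j - a j) := fun j => Real.volume_Ioc
  set B : Fin n → ℝ≥0∞ := fun j => eLpNorm f' p (volume.restrict (I j)) with hBdef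
  set g : ℝ → ℝ≥0∞ := fun x => (‖f x - S x‖₊ : ℝ≥0∞) ^ (2:ℝ) with hgdef
  set M : Fin n → ℝ := fun j => ∫ t in Ioc (a j) (b j), |f' t| with hMdef
  -- pointwise bound
  have hpw : ∀ j : Fin n, ∀ x ∈ I j, g x ≤ (ENNReal.ofReal (M j)) ^ (2:ℝ) := by
    intro j x hx
    have hxIcc : x ∈ Icc (a j) (b j) := Ioc_subset_Icc_self hx
    have hS := hSaff j x hxIcc
    have hbd : |f x - S x| ≤ M j := by
      rw [hS]
      have := pw_bound f f' hf'int hAC (ha0 j) (hab j) (hb1 j) hxIcc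
      rwa [intervalIntegral.integral_of_le (hab j).le] at this
    have : (‖f x - S x‖₊ : ℝ≥0∞) ≤ ENNReal.ofReal (M j) := by
      rw [← enorm_eq_nnnorm, Real.enorm_eq_ofReal_abs]
      exact ENNReal.ofReal_le_ofReal hbd
    exact ENNReal.rpow_le_rpow this (by norm_num)
  -- Hölder: ofReal (M j) ≤ B j * V j ^ (1 - 1/r)
  have hHolder : ∀ j, ENNReal.ofReal (M j) ≤ B j * V j ^ (1 - 1/r : ℝ) := by
    intro j
    have hint : IntegrableOn f' (I j) := hf'int.mono_set (hIsub j)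
    have heq : ENNReal.ofReal (M j) = ∫⁻ t in I j, (‖f' t‖₊ : ℝ≥0∞) := by
      rw [hMdef]
      rw [ofReal_integral_eq_lintegral_ofReal hint.abs
        (Filter.Eventually.of_forall fun t => abs_nonneg _)]
      congr 1
      ext t
      rw [← enorm_eq_nnnorm, Real.enorm_eq_ofReal_abs]
    simp_rw [heq, ← enorm_eq_nnnorm, ← eLpNorm_one_eq_lintegral_enorm]
    have := eLpNorm_le_eLpNorm_mul_rpow_measure_univ (μ := volume.restrict (I j))
      (p := 1) (q := p) hp hint.aestronglyMeasurable (f := f')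
    simpa [Measure.restrict_apply_univ, ENNReal.toReal_one] using this
  -- per-interval integral bound
  have hper : ∀ j, (∫⁻ x in I j, g x) ≤ B j ^ (2:ℝ) * H ^ (3 - 2/r : ℝ) := by
    intro j
    have hV0 : V j ≠ 0 := by
      rw [hVval j]
      exact (ENNReal.ofReal_pos.mpr (hΔpos j)).ne'
    have hVtop : V j ≠ ∞ := by rw [hVval j]; exact ENNReal.ofReal_ne_top
    calc (∫⁻ x in I j, g x) ≤ ∫⁻ _ in I j, (ENNReal.ofReal (M j)) ^ (2:ℝ) :=
          setLIntegral_mono' measurableSet_Ioc (hpw j)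
      _ = (ENNReal.ofReal (M j)) ^ (2:ℝ) * V j := by
          rw [setLIntegral_const]
      _ ≤ (B j * V j ^ (1 - 1/r : ℝ)) ^ (2:ℝ) * V j := by
          gcongr
          · exact hHolder j
      _ = B j ^ (2:ℝ) * V j ^ (3 - 2/r : ℝ) := by
          rw [ENNReal.mul_rpow_of_nonneg _ _ (by norm_num : (0:ℝ) ≤ 2),
            ← ENNReal.rpow_mul]
          rw [mul_assoc]
          congr 1
          nth_rewrite 2 [← ENNReal.rpow_one (V j)]
          rw [← ENNReal.rpow_add _ _ hV0 hVtop]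
          congr 1
          ring
      _ ≤ B j ^ (2:ℝ) * H ^ (3 - 2/r : ℝ) := by
          gcongr
          · have : 2/r ≤ 2 := by
              rw [div_le_iff₀ hr0]; nlinarith
            linarith
          · rw [hVval j, hHdef]
            exact ENNReal.ofReal_le_ofReal (hΔle j)
  -- full integral bound
  have hXdef : ∀ j, B j ^ (2:ℝ) = (∫⁻ t in I j, (‖f' t‖₊ : ℝ≥0∞) ^ r) ^ (2/r : ℝ) := by
    intro j
    show eLpNorm f' p (volume.restrict (I j)) ^ (2:ℝ) =
      (∫⁻ t in I j, (‖f' t‖₊ : ℝ≥0∞) ^ r) ^ (2/r : ℝ)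
    rw [eLpNorm_eq_lintegral_rpow_enorm_toReal hp0 hptop, ← ENNReal.rpow_mul]
    congr 1
    field_simp
    exact div_self hr0.ne'
  have hsum1 : (∫⁻ x in Icc (0:ℝ) 1, g x) ≤
      ∑ j : Fin n, ∫⁻ x in I j, g x := by
    rw [← Measure.restrict_congr_set Ioc_ae_eq_Icc]
    have hc : Ioc (0:ℝ) 1 ⊆ ⋃ j : Fin n, I j := by
      rw [← hξ0, ← hξ1]; exact cover_lemma hn ξ hmono
    calc (∫⁻ x in Ioc (0:ℝ) 1, g x) ≤ ∫⁻ x in ⋃ j : Fin n, I j, g x :=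
          lintegral_mono_set hc
      _ = ∑' j : Fin n, ∫⁻ x in I j, g x :=
          lintegral_iUnion (fun j => measurableSet_Ioc) (disj_lemma ξ hmono) g
      _ = ∑ j : Fin n, ∫⁻ x in I j, g x := tsum_fintype _
  have hsum2 : ∑ j : Fin n, (∫⁻ t in I j, (‖f' t‖₊ : ℝ≥0∞) ^ r) ≤
      ∫⁻ t in Icc (0:ℝ) 1, (‖f' t‖₊ : ℝ≥0∞) ^ r := by
    rw [← Measure.restrict_congr_set Ioc_ae_eq_Icc]
    rw [← tsum_fintype (L := SummationFilter.unconditional _), ← lintegral_iUnion (fun j => measurableSet_Ioc)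
      (disj_lemma ξ hmono)]
    apply lintegral_mono_set
    apply iUnion_subset
    intro j
    apply Ioc_subset_Ioc
    · rw [← hξ0]; exact hmono.monotone (Fin.zero_le _)
    · rw [← hξ1]; exact hmono.monotone (Fin.le_last _)
  have hq21 : (1:ℝ) ≤ 2/r := by
    rw [le_div_iff₀ hr0]; linarith
  have hmain : (∫⁻ x in Icc (0:ℝ) 1, g x) ≤
      H ^ (3 - 2/r : ℝ) *
        (∫⁻ t in Icc (0:ℝ) 1, (‖f' t‖₊ : ℝ≥0∞) ^ r) ^ (2/r : ℝ) := by
    calc (∫⁻ x in Icc (0:ℝ) 1, g x) ≤ ∑ j : Fin n, ∫⁻ x in I j, g x := hsum1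
      _ ≤ ∑ j : Fin n, B j ^ (2:ℝ) * H ^ (3 - 2/r : ℝ) :=
          Finset.sum_le_sum fun j _ => hper j
      _ = H ^ (3 - 2/r : ℝ) * ∑ j : Fin n, B j ^ (2:ℝ) := by
          rw [Finset.mul_sum]; congr 1; ext j; ring
      _ ≤ H ^ (3 - 2/r : ℝ) *
          (∫⁻ t in Icc (0:ℝ) 1, (‖f' t‖₊ : ℝ≥0∞) ^ r) ^ (2/r : ℝ) := by
          gcongr H ^ (3 - 2/r : ℝ) * ?_
          calc ∑ j : Fin n, B j ^ (2:ℝ)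
              = ∑ j : Fin n, (∫⁻ t in I j, (‖f' t‖₊ : ℝ≥0∞) ^ r) ^ (2/r : ℝ) := by
                exact Finset.sum_congr rfl fun j _ => hXdef j
            _ ≤ (∑ j : Fin n, ∫⁻ t in I j, (‖f' t‖₊ : ℝ≥0∞) ^ r) ^ (2/r : ℝ) :=
                sum_rpow_le _ _ hq21
            _ ≤ (∫⁻ t in Icc (0:ℝ) 1, (‖f' t‖₊ : ℝ≥0∞) ^ r) ^ (2/r : ℝ) :=
                ENNReal.rpow_le_rpow hsum2 (by linarith)
  -- conclude
  have hLHS : eLpNorm (fun t => f t - S t) 2 (volume.restrict (Icc 0 1)) =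
      (∫⁻ x in Icc (0:ℝ) 1, g x) ^ (1/2 : ℝ) := by
    rw [eLpNorm_eq_lintegral_rpow_enorm_toReal (by norm_num) (by norm_num)]
    norm_num [hgdef]
    rfl
  have hRHS : eLpNorm f' p (volume.restrict (Icc 0 1)) =
      (∫⁻ t in Icc (0:ℝ) 1, (‖f' t‖₊ : ℝ≥0∞) ^ r) ^ (1/r : ℝ) := by
    rw [eLpNorm_eq_lintegral_rpow_enorm_toReal hp0 hptop]
    rfl
  rw [hLHS, hRHS]
  calc (∫⁻ x in Icc (0:ℝ) 1, g x) ^ (1/2 : ℝ)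
      ≤ (H ^ (3 - 2/r : ℝ) *
          (∫⁻ t in Icc (0:ℝ) 1, (‖f' t‖₊ : ℝ≥0∞) ^ r) ^ (2/r : ℝ)) ^ (1/2 : ℝ) :=
        ENNReal.rpow_le_rpow hmain (by norm_num)
    _ = (∫⁻ t in Icc (0:ℝ) 1, (‖f' t‖₊ : ℝ≥0∞) ^ r) ^ (1/r : ℝ) *
          H ^ (3/2 - 1/r : ℝ) := by
        rw [ENNReal.mul_rpow_of_nonneg _ _ (by norm_num : (0:ℝ) ≤ 1/2),
          ← ENNReal.rpow_mul, ← ENNReal.rpow_mul, mul_comm]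
        have e1 : (2/r) * (1/2) = 1/r := by field_simp
        have e2 : (3 - 2/r) * (1/2) = 3/2 - 1/r := by ring
        rw [e1, e2]

/-- `L₂` error bound for the piecewise-linear interpolant: if `f` is absolutely
continuous on `[0,1]` with a.e. derivative `f' ∈ L_p[0,1]`, and `S` interpolates
`f` at `0 = ξ_0 < ⋯ < ξ_n = 1` and is affine on each `[ξ_j, ξ_{j+1}]`, then
`‖f − S‖_{L₂[0,1]} ≤ ‖f'‖_{L_p[0,1]} · h^s` where `h` is the maximal spacing and
`s := 1 − (1/p − 1/2)₊`. -/
theorem stmt_14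
    (p : ℝ≥0∞) (hp : 1 ≤ p)
    {n : ℕ} (hn : 0 < n) (ξ : Fin (n + 1) → ℝ)
    (hmono : StrictMono ξ) (hξ0 : ξ 0 = 0) (hξ1 : ξ (Fin.last n) = 1)
    (h : ℝ)
    (hmax : IsGreatest (Set.range fun j : Fin n => ξ j.succ - ξ j.castSucc) h)
    (f f' : ℝ → ℝ)
    (hf'int : IntegrableOn f' (Icc 0 1))
    (hAC : ∀ x ∈ Icc (0 : ℝ) 1, f x = f 0 + ∫ t in (0 : ℝ)..x, f' t)
    (hf'Lp : MemLp f' p (volume.restrict (Icc 0 1)))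
    (S : ℝ → ℝ)
    (hSaff : ∀ j : Fin n, ∀ x ∈ Icc (ξ j.castSucc) (ξ j.succ),
      S x = f (ξ j.castSucc) +
        (f (ξ j.succ) - f (ξ j.castSucc)) / (ξ j.succ - ξ j.castSucc) *
          (x - ξ j.castSucc)) :
    eLpNorm (fun t => f t - S t) 2 (volume.restrict (Icc 0 1)) ≤
      eLpNorm f' p (volume.restrict (Icc 0 1)) *
        ENNReal.ofReal (h ^ (1 - max (1 / p.toReal - 1 / 2) 0)) := by
  have hΔpos : 0 < ξ (⟨0, hn⟩ : Fin n).succ - ξ (⟨0, hn⟩ : Fin n).castSucc :=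
    sub_pos.mpr (hmono (Fin.castSucc_lt_succ))
  have hh : 0 < h := lt_of_lt_of_le hΔpos (hmax.2 ⟨⟨0, hn⟩, rfl⟩)
  by_cases hple : p ≤ 2
  · -- case 1 ≤ p ≤ 2
    have hptop : p ≠ ∞ := ne_top_of_le_ne_top (by norm_num) hple
    have hr1 : 1 ≤ p.toReal := by
      rw [← ENNReal.toReal_one]; exact ENNReal.toReal_mono hptop hp
    have hr2 : p.toReal ≤ 2 := by
      calc p.toReal ≤ (2 : ℝ≥0∞).toReal := ENNReal.toReal_mono (by norm_num) hple
        _ = 2 := by norm_num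
    have hr0 : (0:ℝ) < p.toReal := lt_of_lt_of_le one_pos hr1
    have hsexp : 1 - max (1 / p.toReal - 1 / 2) 0 = 3 / 2 - 1 / p.toReal := by
      rw [max_eq_left (by
        have := one_div_le_one_div_of_le hr0 hr2
        linarith)]
      ring
    rw [hsexp, ← ENNReal.ofReal_rpow_of_pos hh]
    exact core_lemma p hp hple hn ξ hmono hξ0 hξ1 h hmax f f' hf'int hAC S hSaff
  · -- case 2 < p
    push_neg at hple
    have hsexp : 1 - max (1 / p.toReal - 1 / 2) 0 = 1 := by
      have hle : 1 / p.toReal ≤ 1 / 2 := by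
        by_cases hpt : p = ∞
        · simp [hpt]
        · have h2 : (2:ℝ) ≤ p.toReal := by
            calc (2:ℝ) = (2 : ℝ≥0∞).toReal := by norm_num
              _ ≤ p.toReal := ENNReal.toReal_mono hpt hple.le
          exact one_div_le_one_div_of_le two_pos h2
      rw [max_eq_right (by linarith)]
      ring
    rw [hsexp, Real.rpow_one]
    have hprob : IsProbabilityMeasure (volume.restrict (Icc (0:ℝ) 1)) := by
      constructor
      simp [Real.volume_Icc]
    have hcore := core_lemma 2 (by norm_num) le_rfl hn ξ hmono hξ0 hξ1 h hmax
      f f' hf'int hAC S hSaff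
    have h2r : (3 / 2 - 1 / (2:ℝ≥0∞).toReal : ℝ) = 1 := by norm_num
    rw [h2r, ENNReal.rpow_one] at hcore
    refine hcore.trans (mul_le_mul_left ?_ _)
    exact eLpNorm_le_eLpNorm_of_exponent_le hple.le hf'int.aestronglyMeasurable
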